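/- Let L be a finite lattice of height 3. Then L is isomorphic to the lattice of flats of some boolean representable finite simplicial complex if and only if L is atomistic and the graph Γ_L has no supercliques. -/

import Mathlib

universe u v

/-- `F ⊆ V` is a flat of the simplicial complex `(V, H)`: for every `I ∈ H` with
`I ⊆ F` and every `p ∈ V \ F`, `I ∪ {p} ∈ H`. -/
def IsCFlat {α : Type u} (V : Set α) (H : Set (Set α)) (F : Set α) : Prop :=
  F ⊆ V ∧ ∀ I ∈ H, I ⊆ F → ∀ p ∈ V \ F, insert p I ∈ H

/-- `(V, H)` is a finite simplicial complex: `V` is finite and nonempty, and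
`H ⊆ 2^V` is nonempty and closed under taking subsets. -/
def IsCpx {α : Type u} (V : Set α) (H : Set (Set α)) : Prop :=
  V.Finite ∧ V.Nonempty ∧ H.Nonempty ∧ (∀ X ∈ H, X ⊆ V) ∧ ∀ X ∈ H, ∀ Y ⊆ X, Y ∈ H

/-- `X` is a transversal of the successive differences for some chain
`F 0 ⊂ F 1 ⊂ … ⊂ F k` of flats of `(V, H)`: `X` admits an enumeration
`x 0, …, x (k-1)` with `x i ∈ F (i+1) \ F i`. -/
def TransvSD {α : Type u} (V : Set α) (H : Set (Set α)) (X : Set α) : Prop :=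
  ∃ (k : ℕ) (F : Fin (k + 1) → Set α) (x : Fin k → α),
    (∀ i, IsCFlat V H (F i)) ∧ StrictMono F ∧
    Function.Injective x ∧ X = Set.range x ∧
    ∀ i : Fin k, x i ∈ F i.succ \ F i.castSucc

/-- `(V, H)` is boolean representable: every `X ∈ H` is a transversal of the
successive differences for some chain of flats of `(V, H)`. -/
def BoolRep {α : Type u} (V : Set α) (H : Set (Set α)) : Prop :=
  ∀ X ∈ H, TransvSD V H X

/-- `xξ` : the set of atoms of `L` lying below `x`. -/
def latxi (L : Type u) [Lattice L] [OrderBot L] (x : L) : Set L :=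
  {a | IsAtom a ∧ a ≤ x}

/-- `T_L` : the set of transversals of chains in `L`, i.e. sets of atoms `A`
admitting an enumeration `e 0, …, e (m-1)` and a chain `c 0 < … < c m` in `L`
with `e i ∈ (c (i+1))ξ \ (c i)ξ`. -/
def TLat (L : Type u) [Lattice L] [OrderBot L] : Set (Set L) :=
  {A | ∃ (m : ℕ) (c : Fin (m + 1) → L) (e : Fin m → L), StrictMono c ∧
      Function.Injective e ∧ A = Set.range e ∧
      ∀ i : Fin m, e i ∈ latxi L (c i.succ) \ latxi L (c i.castSucc)}

/-- A lattice is atomistic if every element is a join of atoms. -/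
def AtomisticLat (L : Type u) [Lattice L] [OrderBot L] : Prop :=
  ∀ x : L, ∃ s : Finset L, (∀ a ∈ s, IsAtom a) ∧ x = s.sup id

/-- The height of `L` is `n`: there is a chain `x_0 < … < x_n` and no longer chain. -/
def hasHeight (L : Type u) [Preorder L] (n : ℕ) : Prop :=
  (∃ c : Fin (n + 1) → L, StrictMono c) ∧
    ∀ (m : ℕ) (c : Fin (m + 1) → L), StrictMono c → m ≤ n

/-- Adjacency in the graph `Γ_L`: distinct atoms `a, b` with `a ∨ b = ⊤`. -/
def AdjL (L : Type u) [Lattice L] [BoundedOrder L] (a b : L) : Prop :=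
  IsAtom a ∧ IsAtom b ∧ a ≠ b ∧ a ⊔ b = ⊤

/-- `W` is a superclique of `Γ_L`: a clique of at least two atoms such that for
all distinct `a, b ∈ W`, every vertex `c ∉ W` is not adjacent to `a` or not
adjacent to `b`. -/
def IsSuperclique (L : Type u) [Lattice L] [BoundedOrder L] (W : Set L) : Prop :=
  W ⊆ {a : L | IsAtom a} ∧ 2 ≤ W.ncard ∧
    (∀ a ∈ W, ∀ b ∈ W, a ≠ b → AdjL L a b) ∧
    ∀ a ∈ W, ∀ b ∈ W, a ≠ b → ∀ c ∈ {x : L | IsAtom x} \ W,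
      ¬ AdjL L c a ∨ ¬ AdjL L c b

set_option linter.unusedSectionVars false
set_option linter.unusedVariables false
set_option maxHeartbeats 1000000

section Shared
variable {L : Type u} [Lattice L] [Fintype L] [BoundedOrder L]

lemma no5 (hh : hasHeight L 3) {x0 x1 x2 x3 x4 : L}
    (h01 : x0 < x1) (h12 : x1 < x2) (h23 : x2 < x3) (h34 : x3 < x4) : False := by
  have hsm : StrictMono (![x0, x1, x2, x3, x4] : Fin 5 → L) := by
    rw [Fin.strictMono_iff_lt_succ]
    intro i
    fin_cases i <;> simpa
  have := hh.2 4 _ hsm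
  omega

lemma exists_atom_le {x : L} (hx : x ≠ ⊥) : ∃ a, IsAtom a ∧ a ≤ x := by
  classical
  have hne : (Finset.univ.filter (fun y => ⊥ < y ∧ y ≤ x)).Nonempty := by
    refine ⟨x, ?_⟩
    simp [bot_lt_iff_ne_bot, hx]
  obtain ⟨m, hm, hmin⟩ : ∃ m ∈ Finset.univ.filter (fun y => ⊥ < y ∧ y ≤ x),
      ∀ z ∈ Finset.univ.filter (fun y => ⊥ < y ∧ y ≤ x), ¬ z < m := by
    obtain ⟨m, hm⟩ := Finset.exists_minimal hne
    exact ⟨m, hm.1, fun z hz hlt => hm.not_lt hz hlt⟩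
  simp only [Finset.mem_filter, Finset.mem_univ, true_and] at hm
  refine ⟨m, ⟨ne_of_gt hm.1, fun b hb => ?_⟩, hm.2⟩
  by_contra hbne
  exact hmin b (by simp [Finset.mem_filter, bot_lt_iff_ne_bot, hbne, le_trans hb.le hm.2]) hb

lemma atom_lt_sup_of_ne {a b : L} (ha : IsAtom a) (hb : IsAtom b) (hne : a ≠ b) :
    a < a ⊔ b := by
  rcases lt_or_eq_of_le (le_sup_left : a ≤ a ⊔ b) with h | h
  · exact h
  · exfalso
    have hba : b ≤ a := le_sup_right.trans h.ge
    rcases ha.le_iff.mp hba with h' | h'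
    · exact hb.1 h'
    · exact hne h'.symm

lemma key_join (hh : hasHeight L 3) {a b w : L} (ha : IsAtom a) (hb : IsAtom b)
    (hne : a ≠ b) (hw : a ⊔ b ≤ w) (hwt : w ≠ ⊤) : a ⊔ b = w := by
  by_contra hne2
  exact no5 hh ha.1.bot_lt (atom_lt_sup_of_ne ha hb hne) (lt_of_le_of_ne hw hne2) hwt.lt_top

end Shared

section Backward
variable (L : Type u) [Lattice L] [Fintype L] [BoundedOrder L]

def AtV : Set L := {a | IsAtom a}

def HB : Set (Set L) :=
  {X | X ⊆ AtV L ∧ (X.ncard ≤ 2 ∨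
    ∃ a b c z, X = {a, b, c} ∧ a ≠ b ∧ a ≠ c ∧ b ≠ c ∧ z ≠ ⊤ ∧ a ≤ z ∧ b ≤ z ∧ ¬ c ≤ z)}

variable {L}

lemma ncard_triple {a b c : L} (hab : a ≠ b) (hac : a ≠ c) (hbc : b ≠ c) :
    ({a, b, c} : Set L).ncard = 3 :=
  Set.ncard_eq_three.mpr ⟨a, b, c, hab, hac, hbc, rfl⟩

lemma HB_ncard_le_three {X : Set L} (hX : X ∈ HB L) : X.ncard ≤ 3 := by
  rcases hX.2 with h | ⟨a, b, c, z, rfl, hab, hac, hbc, _⟩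
  · omega
  · rw [ncard_triple hab hac hbc]

lemma latxi_top : latxi L ⊤ = AtV L := by
  ext a; simp [latxi, AtV, le_top]

lemma latxi_bot : latxi L ⊥ = (∅ : Set L) := by
  ext a
  simp only [latxi, Set.mem_setOf_eq, Set.mem_empty_iff_false, iff_false, not_and]
  intro ha hle
  exact ha.1 (le_bot_iff.mp hle)

lemma latxi_atom {a : L} (ha : IsAtom a) : latxi L a = {a} := by
  ext b
  simp only [latxi, Set.mem_setOf_eq, Set.mem_singleton_iff]
  constructor
  · rintro ⟨hb, hba⟩
    rcases ha.le_iff.mp hba with h | h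
    · exact absurd h hb.1
    · exact h
  · rintro rfl
    exact ⟨ha, le_rfl⟩

lemma latxi_mono {x y : L} (h : x ≤ y) : latxi L x ⊆ latxi L y :=
  fun a ha => ⟨ha.1, ha.2.trans h⟩

lemma latxi_subset_AtV (x : L) : latxi L x ⊆ AtV L := fun a ha => ha.1

/-- every `xξ` is a flat of `(AtV, HB)` -/
lemma flat_xi (hh : hasHeight L 3) (x : L) : IsCFlat (AtV L) (HB L) (latxi L x) := by
  by_cases hx : x = ⊤
  · subst hx
    rw [latxi_top]
    exact ⟨subset_rfl, fun I hI hIs p hp => absurd hp.1 hp.2⟩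
  refine ⟨latxi_subset_AtV x, ?_⟩
  intro I hI hIsub p hp
  obtain ⟨hpV, hpx⟩ := hp
  have hplex : ¬ p ≤ x := fun h => hpx ⟨hpV, h⟩
  rcases hI.2 with hc2 | ⟨a, b, c, z, rfl, hab, hac, hbc, hzt, haz, hbz, hcz⟩
  · by_cases h2 : I.ncard = 2
    · obtain ⟨a, b, hab, rfl⟩ := Set.ncard_eq_two.mp h2
      have haF : a ∈ latxi L x := hIsub (by simp)
      have hbF : b ∈ latxi L x := hIsub (by simp)
      have hap : a ≠ p := fun h => hpx (h ▸ haF)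
      have hbp : b ≠ p := fun h => hpx (h ▸ hbF)
      refine ⟨?_, Or.inr ⟨a, b, p, x, by ext q; constructor <;> (intro hq; simp at hq ⊢; tauto),
        hab, hap, hbp, hx, haF.2, hbF.2, hplex⟩⟩
      intro q hq
      rcases hq with rfl | hq
      · exact hpV
      · exact hI.1 hq
    · refine ⟨?_, Or.inl (le_trans (Set.ncard_insert_le p I) (by omega))⟩
      intro q hq
      rcases hq with rfl | hq
      · exact hpV
      · exact hI.1 hq
  · exfalso
    have haA : IsAtom a := hI.1 (by simp)
    have hbA : IsAtom b := hI.1 (by simp)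
    have hax : a ≤ x := (hIsub (by simp)).2
    have hbx : b ≤ x := (hIsub (by simp)).2
    have hcx : c ≤ x := (hIsub (by simp)).2
    have h1 : a ⊔ b = z := key_join hh haA hbA hab (sup_le haz hbz) hzt
    have h2 : a ⊔ b = x := key_join hh haA hbA hab (sup_le hax hbx) hx
    exact hcz (by rw [← h1, h2]; exact hcx)

/-- every flat of `(AtV, HB)` is some `xξ` -/
lemma flat_only (hh : hasHeight L 3) (hsc : ¬ ∃ W : Set L, IsSuperclique L W)
    {F : Set L} (hF : IsCFlat (AtV L) (HB L) F) : ∃ x : L, F = latxi L x := by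
  obtain ⟨hFV, hFax⟩ := hF
  by_cases hFtop : F = AtV L
  · exact ⟨⊤, by rw [hFtop, latxi_top]⟩
  obtain ⟨p0, hp0V, hp0F⟩ : ∃ p0, p0 ∈ AtV L ∧ p0 ∉ F := by
    rcases Set.exists_of_ssubset (ssubset_of_subset_of_ne hFV hFtop) with ⟨p0, h1, h2⟩
    exact ⟨p0, h1, h2⟩
  -- no 3-element member of H inside F
  have hnotri : ∀ T ∈ HB L, T ⊆ F → T.ncard ≤ 2 := by
    intro T hT hTF
    by_contra h3
    have hT3 : T.ncard = 3 := le_antisymm (HB_ncard_le_three hT) (by omega)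
    have hX : insert p0 T ∈ HB L := hFax T hT hTF p0 ⟨hp0V, hp0F⟩
    have hp0T : p0 ∉ T := fun h => hp0F (hTF h)
    have h4 : (insert p0 T).ncard = 4 := by
      rw [Set.ncard_insert_of_notMem hp0T (Set.Finite.subset (Set.toFinite _) hTF), hT3]
    have := HB_ncard_le_three hX
    omega
  by_cases hFe : F = ∅
  · exact ⟨⊥, by rw [hFe, latxi_bot]⟩
  obtain ⟨a, ha⟩ := Set.nonempty_iff_ne_empty.mpr hFe
  by_cases hsingle : ∀ b ∈ F, b = a
  · refine ⟨a, ?_⟩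
    rw [latxi_atom (hFV ha)]
    ext q
    simp only [Set.mem_singleton_iff]
    exact ⟨fun hq => hsingle q hq, fun hq => hq ▸ ha⟩
  push_neg at hsingle
  obtain ⟨b, hb, hba⟩ := hsingle
  by_cases hadj : ∃ u v, u ∈ F ∧ v ∈ F ∧ u ≠ v ∧ u ⊔ v = ⊤
  · -- F would be a superclique
    exfalso
    apply hsc
    obtain ⟨u, v, hu, hv, huv, hadjuv⟩ := hadj
    have spread : ∀ u v c : L, u ∈ F → v ∈ F → c ∈ F → u ≠ v → u ⊔ v = ⊤ →
        c ≠ u → c ≠ v → c ⊔ u = ⊤ ∧ c ⊔ v = ⊤ := by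
      intro u v c hu hv hc huv htop hcu hcv
      have hntri : ({u, v, c} : Set L) ∉ HB L := by
        intro hmem
        have := hnotri _ hmem (by intro q hq; rcases hq with rfl | rfl | rfl <;> assumption)
        rw [ncard_triple huv (Ne.symm hcu) (Ne.symm hcv)] at this
        omega
      constructor
      · by_contra hne
        apply hntri
        refine ⟨by intro q hq; rcases hq with rfl | rfl | rfl <;> exact hFV (by assumption),
          Or.inr ⟨c, u, v, c ⊔ u, by ext q; simp; tauto, hcu, hcv, huv, hne,
            le_sup_left, le_sup_right, ?_⟩⟩
        intro hvle
        have h1 : u ⊔ v ≤ c ⊔ u := sup_le le_sup_right hvle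
        rw [htop] at h1
        exact hne (top_le_iff.mp h1)
      · by_contra hne
        apply hntri
        refine ⟨by intro q hq; rcases hq with rfl | rfl | rfl <;> exact hFV (by assumption),
          Or.inr ⟨c, v, u, c ⊔ v, by ext q; simp; tauto, hcv, hcu, Ne.symm huv, hne,
            le_sup_left, le_sup_right, ?_⟩⟩
        intro hule
        have h1 : u ⊔ v ≤ c ⊔ v := sup_le hule le_sup_right
        rw [htop] at h1
        exact hne (top_le_iff.mp h1)
    have clique : ∀ c ∈ F, ∀ d ∈ F, c ≠ d → c ⊔ d = ⊤ := by
      intro c hc d hd hcd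
      by_cases hcu : c = u
      · subst hcu
        by_cases hdv : d = v
        · subst hdv; exact hadjuv
        · have := (spread c v d hu hv hd huv hadjuv (Ne.symm hcd) hdv).1
          rwa [sup_comm] at this
      · by_cases hcv : c = v
        · subst hcv
          by_cases hdu : d = u
          · subst hdu; rw [sup_comm]; exact hadjuv
          · have := (spread u c d hu hv hd huv hadjuv hdu (Ne.symm hcd)).2
            rwa [sup_comm] at this
        · have hcu' := (spread u v c hu hv hc huv hadjuv hcu hcv).1
          by_cases hdu : d = u
          · subst hdu; exact hcu'
          · have h2 := (spread c u d hc hu hd hcu hcu' (Ne.symm hcd) hdu).1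
            rwa [sup_comm]
    refine ⟨F, hFV, ?_, ?_, ?_⟩
    · have : 1 < F.ncard := (Set.one_lt_ncard (Set.toFinite F)).mpr ⟨a, ha, b, hb, fun h => hba h.symm⟩
      omega
    · intro c hc d hd hcd
      exact ⟨hFV hc, hFV hd, hcd, clique c hc d hd hcd⟩
    · intro c hc d hd hcd t ht
      obtain ⟨htA, htF⟩ := ht
      have hpair : ({c, d} : Set L) ∈ HB L := by
        refine ⟨?_, Or.inl (le_of_eq (Set.ncard_pair hcd))⟩
        intro q hq; rcases hq with rfl | rfl <;> exact hFV (by assumption)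
      have hX : insert t {c, d} ∈ HB L :=
        hFax _ hpair (by intro q hq; rcases hq with rfl | rfl <;> assumption) t ⟨htA, htF⟩
      have htc : t ≠ c := fun h => htF (h ▸ hc)
      have htd : t ≠ d := fun h => htF (h ▸ hd)
      rcases hX.2 with hc2 | ⟨a', b', c', z, hXeq, hab', hac', hbc', hzt, haz, hbz, hcz⟩
      · exfalso
        rw [ncard_triple htc htd hcd] at hc2
        omega
      · -- case on position of c'
        have hmem : ∀ y : L, y ∈ ({a', b', c'} : Set L) ↔ (y = t ∨ y = c ∨ y = d) := by
          intro y
          rw [← hXeq]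
          simp
        have htm : t = a' ∨ t = b' ∨ t = c' := by
          have : t ∈ ({a', b', c'} : Set L) := (hmem t).mpr (Or.inl rfl)
          simpa using this
        have hcm : c = a' ∨ c = b' ∨ c = c' := by
          have : c ∈ ({a', b', c'} : Set L) := (hmem c).mpr (Or.inr (Or.inl rfl))
          simpa using this
        have hdm : d = a' ∨ d = b' ∨ d = c' := by
          have : d ∈ ({a', b', c'} : Set L) := (hmem d).mpr (Or.inr (Or.inr rfl))
          simpa using this
        -- helper: a thing ≤ z cannot join with another thing ≤ z to ⊤
        have hjne : ∀ y w : L, y ≤ z → w ≤ z → y ⊔ w ≠ ⊤ := by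
          intro y w hy hw h
          exact hzt (top_le_iff.mp (h ▸ sup_le hy hw))
        have noadj : ∀ y w : L, y ≤ z → w ≤ z → ¬ AdjL L y w := by
          intro y w hy hw hA
          exact hjne y w hy hw hA.2.2.2
        rcases htm with rfl | rfl | rfl
        · -- t = a' : t ≤ z
          rcases hcm with rfl | rfl | rfl
          · exact (htc rfl).elim
          · exact Or.inl (noadj t c haz hbz)
          · -- c = c' : then d = b'
            rcases hdm with rfl | rfl | rfl
            · exact (htd rfl).elim
            · exact Or.inr (noadj t d haz hbz)
            · exact (hcd rfl).elim
        · -- t = b'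
          rcases hcm with rfl | rfl | rfl
          · exact Or.inl (noadj t c hbz haz)
          · exact (htc rfl).elim
          · rcases hdm with rfl | rfl | rfl
            · exact Or.inr (noadj t d hbz haz)
            · exact (htd rfl).elim
            · exact (hcd rfl).elim
        · -- t = c' : c, d ∈ {a', b'} : c ⊔ d ≤ z = contradiction with clique
          exfalso
          rcases hcm with rfl | rfl | rfl
          · rcases hdm with rfl | rfl | rfl
            · exact hcd rfl
            · exact hjne c d haz hbz (clique c hc d hd hcd)
            · exact htd rfl
          · rcases hdm with rfl | rfl | rfl
            · exact hjne c d hbz haz (clique c hc d hd hcd)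
            · exact hcd rfl
            · exact htd rfl
          · exact htc rfl
  · -- no adjacent pair : F = ξ(a ⊔ b)
    push_neg at hadj
    have hz : a ⊔ b ≠ ⊤ := hadj a b ha hb (Ne.symm hba)
    have haA : IsAtom a := hFV ha
    have hbA : IsAtom b := hFV hb
    have hpairF : ({a, b} : Set L) ⊆ F := by
      intro q hq; rcases hq with rfl | rfl <;> assumption
    have hpairH : ({a, b} : Set L) ∈ HB L := by
      refine ⟨fun q hq => hFV (hpairF hq), Or.inl (le_of_eq (Set.ncard_pair (Ne.symm hba)))⟩
    refine ⟨a ⊔ b, ?_⟩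
    ext q
    constructor
    · intro hq
      refine ⟨hFV hq, ?_⟩
      by_cases hqa : q = a
      · exact hqa ▸ le_sup_left
      by_cases hqb : q = b
      · exact hqb ▸ le_sup_right
      by_contra hqz
      have : ({a, b, q} : Set L) ∈ HB L := by
        refine ⟨by intro y hy; rcases hy with rfl | rfl | rfl <;> exact hFV (by assumption),
          Or.inr ⟨a, b, q, a ⊔ b, rfl, Ne.symm hba, Ne.symm hqa, Ne.symm hqb, hz,
            le_sup_left, le_sup_right, hqz⟩⟩
      have h3 := hnotri _ this (by intro y hy; rcases hy with rfl | rfl | rfl <;> assumption)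
      rw [ncard_triple (Ne.symm hba) (Ne.symm hqa) (Ne.symm hqb)] at h3
      omega
    · rintro ⟨hqA, hqle⟩
      by_contra hqF
      have hX : insert q {a, b} ∈ HB L := hFax _ hpairH hpairF q ⟨hqA, hqF⟩
      have hqa : q ≠ a := fun h => hqF (h ▸ ha)
      have hqb : q ≠ b := fun h => hqF (h ▸ hb)
      rcases hX.2 with hc2 | ⟨a', b', c', z', hXeq, hab', hac', hbc', hzt, haz, hbz, hcz⟩
      · rw [ncard_triple hqa hqb (Ne.symm hba)] at hc2
        omega
      · have hmem : ∀ y : L, y ∈ ({a', b', c'} : Set L) → (y = q ∨ y = a ∨ y = b) := by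
          intro y hy
          rw [← hXeq] at hy
          simpa using hy
        have hsub : ∀ y : L, y ∈ ({a', b', c'} : Set L) → (IsAtom y ∧ y ≤ a ⊔ b) := by
          intro y hy
          rcases hmem y hy with rfl | rfl | rfl
          · exact ⟨hqA, hqle⟩
          · exact ⟨haA, le_sup_left⟩
          · exact ⟨hbA, le_sup_right⟩
        have ha' := hsub a' (by simp)
        have hb' := hsub b' (by simp)
        have hc' := hsub c' (by simp)
        have h1 : a' ⊔ b' = z' := key_join hh ha'.1 hb'.1 hab' (sup_le haz hbz) hzt
        have h2 : a' ⊔ b' = a ⊔ b := key_join hh ha'.1 hb'.1 hab' (sup_le ha'.2 hb'.2) hz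
        exact hcz (by rw [← h1, h2]; exact hc'.2)

lemma empty_flat_B (hh : hasHeight L 3) : IsCFlat (AtV L) (HB L) (∅ : Set L) :=
  latxi_bot (L := L) ▸ flat_xi hh ⊥

lemma top_flat_B (hh : hasHeight L 3) : IsCFlat (AtV L) (HB L) (AtV L) :=
  latxi_top (L := L) ▸ flat_xi hh ⊤

lemma singleton_flat_B (hh : hasHeight L 3) {a : L} (ha : IsAtom a) :
    IsCFlat (AtV L) (HB L) ({a} : Set L) :=
  latxi_atom ha ▸ flat_xi hh a

lemma boolrep_B (hh : hasHeight L 3) : BoolRep (AtV L) (HB L) := by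
  intro X hX
  rcases hX.2 with hc2 | ⟨a, b, c, z, rfl, hab, hac, hbc, hzt, haz, hbz, hcz⟩
  · interval_cases h : X.ncard
    · -- X = ∅
      have hXe : X = ∅ := (Set.ncard_eq_zero (Set.Finite.subset (Set.toFinite _) hX.1)).mp h
      refine ⟨0, fun _ => AtV L, Fin.elim0, fun _ => top_flat_B hh, ?_, ?_, ?_, fun i => i.elim0⟩
      · intro i j hij
        exact absurd (Fin.lt_def.mp hij) (by omega)
      · exact fun i => i.elim0
      · rw [hXe, Set.range_eq_empty]
    · -- X = {a}
      obtain ⟨a, rfl⟩ := Set.ncard_eq_one.mp h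
      have haV : a ∈ AtV L := hX.1 rfl
      refine ⟨1, ![∅, AtV L], ![a], ?_, ?_, ?_, ?_, ?_⟩
      · intro i; fin_cases i
        · exact empty_flat_B hh
        · exact top_flat_B hh
      · rw [Fin.strictMono_iff_lt_succ]
        intro i; fin_cases i
        simpa using Set.empty_ssubset.mpr ⟨a, haV⟩
      · intro i j _; exact Subsingleton.elim i j
      · ext q
        constructor
        · intro hq; exact ⟨0, by simpa using hq.symm⟩
        · rintro ⟨i, rfl⟩; fin_cases i; simp
      · intro i; fin_cases i
        exact ⟨haV, Set.notMem_empty a⟩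
    · -- X = {a, b}
      obtain ⟨a, b, hab, rfl⟩ := Set.ncard_eq_two.mp h
      have haV : a ∈ AtV L := hX.1 (by simp)
      have hbV : b ∈ AtV L := hX.1 (by simp)
      refine ⟨2, ![∅, {a}, AtV L], ![a, b], ?_, ?_, ?_, ?_, ?_⟩
      · intro i; fin_cases i
        · exact empty_flat_B hh
        · exact singleton_flat_B hh haV
        · exact top_flat_B hh
      · rw [Fin.strictMono_iff_lt_succ]
        intro i; fin_cases i
        · simpa using Set.empty_ssubset.mpr ⟨a, rfl⟩
        · simp only [Fin.succ]
          refine ⟨by intro q hq; simp at hq; exact hq ▸ haV, fun hsub => hab ?_⟩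
          have := hsub hbV
          simp_all
      · intro i j hij
        fin_cases i <;> fin_cases j <;> simp_all <;> exact (hab (by assumption)).elim
      · ext q
        constructor
        · intro hq
          rcases hq with rfl | rfl
          · exact ⟨0, rfl⟩
          · exact ⟨1, rfl⟩
        · rintro ⟨i, rfl⟩; fin_cases i <;> simp
      · intro i; fin_cases i
        · exact ⟨rfl, Set.notMem_empty a⟩
        · exact ⟨hbV, by simpa using hab.symm⟩
  · -- triple with witness
    have haV : a ∈ AtV L := hX.1 (by simp)
    have hbV : b ∈ AtV L := hX.1 (by simp)
    have hcV : c ∈ AtV L := hX.1 (by simp)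
    have hblex : b ≤ z := hbz
    refine ⟨3, ![∅, {a}, latxi L z, AtV L], ![a, b, c], ?_, ?_, ?_, ?_, ?_⟩
    · intro i; fin_cases i
      · exact empty_flat_B hh
      · exact singleton_flat_B hh haV
      · exact flat_xi hh z
      · exact top_flat_B hh
    · rw [Fin.strictMono_iff_lt_succ]
      intro i; fin_cases i
      · simpa using Set.empty_ssubset.mpr ⟨a, rfl⟩
      · simp only [Fin.succ]
        refine ⟨by intro q hq; simp at hq; subst hq; exact ⟨haV, haz⟩, fun hsub => hab ?_⟩
        have := hsub ⟨hbV, hbz⟩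
        simp_all
      · simp only [Fin.succ]
        refine ⟨latxi_subset_AtV z, fun hsub => hcz ?_⟩
        exact (hsub hcV).2
    · intro i j hij
      fin_cases i <;> fin_cases j <;> simp_all
    · ext q
      constructor
      · intro hq
        rcases hq with rfl | rfl | rfl
        · exact ⟨0, rfl⟩
        · exact ⟨1, rfl⟩
        · exact ⟨2, rfl⟩
      · rintro ⟨i, rfl⟩; fin_cases i <;> simp
    · intro i; fin_cases i
      · exact ⟨rfl, Set.notMem_empty a⟩
      · exact ⟨⟨hbV, hbz⟩, by simpa using hab.symm⟩
      · refine ⟨hcV, fun hc' => hcz hc'.2⟩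

lemma cpx_B (hh : hasHeight L 3) : IsCpx (AtV L) (HB L) := by
  refine ⟨Set.toFinite _, ?_, ⟨∅, Set.empty_subset _, Or.inl (by simp)⟩, fun X hX => hX.1, ?_⟩
  · -- V nonempty
    obtain ⟨c, hc⟩ := hh.1
    have h03 : c 0 < c 3 := hc (by decide : (0 : Fin 4) < 3)
    have : (⊤ : L) ≠ ⊥ := by
      intro h
      have : c 0 < c 0 := lt_of_lt_of_le h03 (le_top.trans (h ▸ bot_le))
      exact lt_irrefl _ this
    obtain ⟨a, ha, _⟩ := exists_atom_le this
    exact ⟨a, ha⟩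
  · -- downward closed
    intro X hX Y hYX
    refine ⟨hYX.trans hX.1, ?_⟩
    rcases hX.2 with hc2 | htriple
    · exact Or.inl (le_trans (Set.ncard_le_ncard hYX (Set.Finite.subset (Set.toFinite _) hX.1)) hc2)
    · by_cases hYeq : Y = X
      · exact hYeq ▸ hX.2
      · obtain ⟨a, b, c, z, hXeq, hab, hac, hbc, _⟩ := htriple
        have hX3 : X.ncard = 3 := by rw [hXeq]; exact ncard_triple hab hac hbc
        have : Y.ncard < X.ncard :=
          Set.ncard_lt_ncard (ssubset_of_subset_of_ne hYX hYeq)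
            (Set.Finite.subset (Set.toFinite _) hX.1)
        omega

noncomputable def supF (S : Set L) : L := (Set.toFinite S).toFinset.sup id

lemma supF_latxi (hat : AtomisticLat L) (x : L) : supF (latxi L x) = x := by
  apply le_antisymm
  · apply Finset.sup_le
    intro a ha
    rw [Set.Finite.mem_toFinset] at ha
    exact ha.2
  · obtain ⟨s, hs, hx⟩ := hat x
    rw [hx]
    apply Finset.sup_le
    intro a ha
    apply Finset.le_sup (f := id)
    rw [Set.Finite.mem_toFinset]
    exact ⟨hs a ha, hx ▸ Finset.le_sup (f := id) ha⟩

lemma latxi_supF (hat : AtomisticLat L) {x0 : L} :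
    latxi L (supF (latxi L x0)) = latxi L x0 := by
  rw [supF_latxi hat]

lemma supF_mono {S T : Set L} (h : S ⊆ T) : supF S ≤ supF T := by
  apply Finset.sup_mono
  intro a ha
  rw [Set.Finite.mem_toFinset] at ha ⊢
  exact h ha

noncomputable def isoBack (hh : hasHeight L 3) (hat : AtomisticLat L)
    (hsc : ¬ ∃ W : Set L, IsSuperclique L W) :
    L ≃o {F : Set L // IsCFlat (AtV L) (HB L) F} where
  toFun x := ⟨latxi L x, flat_xi hh x⟩
  invFun G := supF G.1
  left_inv x := supF_latxi hat x
  right_inv G := by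
    obtain ⟨x0, hx0⟩ := flat_only hh hsc G.2
    apply Subtype.ext
    simp only [hx0]
    exact latxi_supF hat
  map_rel_iff' := by
    intro x y
    simp only [Equiv.coe_fn_mk, Subtype.mk_le_mk]
    constructor
    · intro h
      calc x = supF (latxi L x) := (supF_latxi hat x).symm
        _ ≤ supF (latxi L y) := supF_mono h
        _ = y := supF_latxi hat y
    · exact fun h => latxi_mono h

lemma backward (hh : hasHeight L 3) (hat : AtomisticLat L)
    (hsc : ¬ ∃ W : Set L, IsSuperclique L W) :
    ∃ (α : Type u) (V : Set α) (H : Set (Set α)), IsCpx V H ∧ BoolRep V H ∧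
      Nonempty (L ≃o {F : Set α // IsCFlat V H F}) :=
  ⟨L, AtV L, HB L, cpx_B hh, boolrep_B hh, ⟨isoBack hh hat hsc⟩⟩

end Backward

section Forward
variable {L : Type u} {α : Type u} [Lattice L] [Fintype L] [BoundedOrder L]
variable {V : Set α} {H : Set (Set α)}

def Fl (e : L ≃o {F : Set α // IsCFlat V H F}) (x : L) : Set α := (e x).1

lemma Fl_flat (e : L ≃o {F : Set α // IsCFlat V H F}) (x : L) : IsCFlat V H (Fl e x) := (e x).2

lemma Fl_subset_V (e : L ≃o {F : Set α // IsCFlat V H F}) (x : L) : Fl e x ⊆ V := (e x).2.1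

lemma Fl_mono (e : L ≃o {F : Set α // IsCFlat V H F}) {x y : L} (h : x ≤ y) :
    Fl e x ⊆ Fl e y := by
  have := e.le_iff_le.mpr h
  exact this

lemma le_of_Fl (e : L ≃o {F : Set α // IsCFlat V H F}) {x y : L} (h : Fl e x ⊆ Fl e y) :
    x ≤ y := by
  apply e.le_iff_le.mp
  exact h

lemma Fl_symm (e : L ≃o {F : Set α // IsCFlat V H F}) {G : Set α} (hG : IsCFlat V H G) :
    Fl e (e.symm ⟨G, hG⟩) = G := by
  show ((e (e.symm ⟨G, hG⟩)) : Set α) = G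
  rw [e.apply_symm_apply]

lemma M_subset (e : L ≃o {F : Set α // IsCFlat V H F}) {G : Set α} (hG : IsCFlat V H G) :
    Fl e ⊥ ⊆ G := by
  have h := Fl_mono e (bot_le : (⊥ : L) ≤ e.symm ⟨G, hG⟩)
  rwa [Fl_symm] at h

lemma V_flat : IsCFlat V H V :=
  ⟨subset_rfl, fun I hI hIs p hp => absurd hp.1 hp.2⟩

lemma Fl_top (e : L ≃o {F : Set α // IsCFlat V H F}) : Fl e ⊤ = V := by
  apply Set.Subset.antisymm (Fl_subset_V e ⊤)
  have h := Fl_mono e (le_top : e.symm ⟨V, V_flat⟩ ≤ ⊤)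
  rwa [Fl_symm] at h

lemma empty_mem_H (hcpx : IsCpx V H) : ∅ ∈ H := by
  obtain ⟨X, hX⟩ := hcpx.2.2.1
  exact hcpx.2.2.2.2 X hX ∅ (Set.empty_subset X)

lemma singleton_mem_H (hcpx : IsCpx V H) (e : L ≃o {F : Set α // IsCFlat V H F})
    {q : α} (hqV : q ∈ V) (hqM : q ∉ Fl e ⊥) : {q} ∈ H := by
  have := (Fl_flat e ⊥).2 ∅ (empty_mem_H hcpx) (Set.empty_subset _) q ⟨hqV, hqM⟩
  simpa using this

def Tset (e : L ≃o {F : Set α // IsCFlat V H F}) (q : α) : Set α :=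
  {v | v ∈ V ∧ ∀ y : L, q ∈ Fl e y → v ∈ Fl e y}

lemma Tset_flat (e : L ≃o {F : Set α // IsCFlat V H F}) (q : α) :
    IsCFlat V H (Tset e q) := by
  refine ⟨fun v hv => hv.1, ?_⟩
  intro I hI hIs p hp
  obtain ⟨hpV, hpT⟩ := hp
  have : ∃ y0 : L, q ∈ Fl e y0 ∧ p ∉ Fl e y0 := by
    by_contra hc
    push_neg at hc
    exact hpT ⟨hpV, hc⟩
  obtain ⟨y0, hq0, hp0⟩ := this
  exact (Fl_flat e y0).2 I hI (fun v hv => (hIs hv).2 y0 hq0) p ⟨hpV, hp0⟩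

noncomputable def cq (e : L ≃o {F : Set α // IsCFlat V H F}) (q : α) : L :=
  e.symm ⟨Tset e q, Tset_flat e q⟩

lemma Fl_cq (e : L ≃o {F : Set α // IsCFlat V H F}) (q : α) : Fl e (cq e q) = Tset e q :=
  Fl_symm e _

lemma mem_Fl_cq (e : L ≃o {F : Set α // IsCFlat V H F}) {q : α} (hqV : q ∈ V) :
    q ∈ Fl e (cq e q) := by
  rw [Fl_cq]
  exact ⟨hqV, fun y hy => hy⟩

lemma cq_le (e : L ≃o {F : Set α // IsCFlat V H F}) {q : α} {y : L}
    (h : q ∈ Fl e y) : cq e q ≤ y := by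
  apply le_of_Fl e
  rw [Fl_cq]
  exact fun v hv => hv.2 y h

lemma mem_Fl_of_cq_le (e : L ≃o {F : Set α // IsCFlat V H F}) {q : α} {y : L}
    (hqV : q ∈ V) (h : cq e q ≤ y) : q ∈ Fl e y :=
  Fl_mono e h (mem_Fl_cq e hqV)

lemma cq_le_flat (e : L ≃o {F : Set α // IsCFlat V H F}) {q : α} {G : Set α}
    (hG : IsCFlat V H G) (hqG : q ∈ G) : Fl e (cq e q) ⊆ G := by
  have h : cq e q ≤ e.symm ⟨G, hG⟩ := cq_le e (by rwa [Fl_symm])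
  have := Fl_mono e h
  rwa [Fl_symm] at this

lemma cq_ne_bot (e : L ≃o {F : Set α // IsCFlat V H F}) {q : α} (hqV : q ∈ V)
    (hqM : q ∉ Fl e ⊥) : cq e q ≠ ⊥ := by
  intro h
  exact hqM (h ▸ mem_Fl_cq e hqV)


lemma mem_H_not_M (hbr : BoolRep V H) (e : L ≃o {F : Set α // IsCFlat V H F})
    {X : Set α} (hX : X ∈ H) {q : α} (hq : q ∈ X) : q ∉ Fl e ⊥ := by
  obtain ⟨k, Fc, x, hflat, hsm, hinj, rfl, hmem⟩ := hbr X hX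
  obtain ⟨i, rfl⟩ := hq
  intro hqM
  exact (hmem i).2 (M_subset e (hflat i.castSucc) hqM)

lemma mem_H_cq_ne (hcpx : IsCpx V H) (hbr : BoolRep V H)
    (e : L ≃o {F : Set α // IsCFlat V H F})
    {X : Set α} (hX : X ∈ H) {q q' : α} (hq : q ∈ X) (hq' : q' ∈ X) (hne : q ≠ q')
    (hcq : cq e q = cq e q') : False := by
  obtain ⟨k, Fc, x, hflat, hsm, hinj, rfl, hmem⟩ := hbr X hX
  have hV : ∀ i : Fin k, x i ∈ V := fun i => hcpx.2.2.2.1 _ hX ⟨i, rfl⟩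
  have core : ∀ (i j : Fin k), i < j → cq e (x i) = cq e (x j) → False := by
    intro i j hij hcqij
    have h1 : x i ∈ Fc i.succ := (hmem i).1
    have h2 : Fl e (cq e (x i)) ⊆ Fc i.succ := cq_le_flat e (hflat _) h1
    have hle : (i.succ : Fin (k+1)) ≤ j.castSucc := by
      rw [Fin.le_def]
      simp only [Fin.val_succ, Fin.coe_castSucc]
      exact Fin.lt_def.mp hij
    have h3 : Fc i.succ ⊆ Fc j.castSucc := hsm.monotone hle
    have h4 : x j ∈ Fl e (cq e (x j)) := mem_Fl_cq e (hV j)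
    rw [← hcqij] at h4
    exact (hmem j).2 (h3 (h2 h4))
  obtain ⟨i, rfl⟩ := hq
  obtain ⟨j, rfl⟩ := hq'
  rcases lt_trichotomy i j with h | h | h
  · exact core i j h hcq
  · exact hne (h ▸ rfl)
  · exact core j i h hcq.symm

/-- the key lemma: the closure of any point not in the minimum flat is an atom -/
lemma clp_atom (hcpx : IsCpx V H) (hbr : BoolRep V H)
    (e : L ≃o {F : Set α // IsCFlat V H F})
    {q : α} (hqV : q ∈ V) (hqM : q ∉ Fl e ⊥) : IsAtom (cq e q) := by
  set Fp : Set α := Fl e ⊥ ∪ {q' | q' ∈ V ∧ cq e q' = cq e q} with hFpdef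
  have hFp : IsCFlat V H Fp := by
    refine ⟨?_, ?_⟩
    · intro v hv
      rcases hv with hv | hv
      · exact Fl_subset_V e ⊥ hv
      · exact hv.1
    · intro I hI hIs r hr
      obtain ⟨hrV, hrFp⟩ := hr
      have hrM : r ∉ Fl e ⊥ := fun h => hrFp (Or.inl h)
      have hrcq : cq e r ≠ cq e q := fun h => hrFp (Or.inr ⟨hrV, h⟩)
      by_cases hIe : I = ∅
      · rw [hIe]
        have := singleton_mem_H hcpx e hrV hrM
        simpa using this
      · obtain ⟨q1, hq1⟩ := Set.nonempty_iff_ne_empty.mpr hIe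
        have hq1r : ∀ q2 ∈ I, q2 ∈ {q' | q' ∈ V ∧ cq e q' = cq e q} := by
          intro q2 hq2
          rcases hIs hq2 with h | h
          · exact absurd h (mem_H_not_M hbr e hI hq2)
          · exact h
        have hIeq : I = {q1} := by
          apply Set.eq_singleton_iff_unique_mem.mpr
          refine ⟨hq1, fun q2 hq2 => ?_⟩
          by_contra hne
          exact mem_H_cq_ne hcpx hbr e hI hq2 hq1 hne
            (((hq1r q2 hq2).2).trans ((hq1r q1 hq1).2).symm)
        have hq1V : q1 ∈ V := (hq1r q1 hq1).1
        have hq1cq : cq e q1 = cq e q := (hq1r q1 hq1).2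
        by_cases hrT : r ∈ Fl e (cq e q1)
        · have hq1nr : q1 ∉ Fl e (cq e r) := by
            intro h
            have h1 : cq e q1 ≤ cq e r := cq_le e h
            have h2 : cq e r ≤ cq e q1 := cq_le e hrT
            exact hrcq ((le_antisymm h2 h1).trans hq1cq)
          have hrH : ({r} : Set α) ∈ H := singleton_mem_H hcpx e hrV hrM
          have hins : insert q1 {r} ∈ H :=
            (Fl_flat e (cq e r)).2 {r} hrH (Set.singleton_subset_iff.mpr (mem_Fl_cq e hrV))
              q1 ⟨hq1V, hq1nr⟩
          rw [hIeq, Set.pair_comm]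
          exact hins
        · rw [hIeq]
          exact (Fl_flat e (cq e q1)).2 {q1} (hIeq ▸ hI)
            (Set.singleton_subset_iff.mpr (mem_Fl_cq e hq1V)) r ⟨hrV, hrT⟩
  constructor
  · exact cq_ne_bot e hqV hqM
  · intro b hb
    by_contra hbne
    have hblt : (⊥ : L) < b := bot_lt_iff_ne_bot.mpr hbne
    have hlt : Fl e ⊥ ⊂ Fl e b := by
      refine Set.ssubset_def.mpr ⟨Fl_mono e hblt.le, fun h => hblt.ne (e.injective (Subtype.ext
        (Set.Subset.antisymm (Fl_mono e hblt.le) h)))⟩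
    obtain ⟨s, hs1, hs2⟩ := Set.exists_of_ssubset hlt
    have hFlsub : Fl e (cq e q) ⊆ Fp := cq_le_flat e hFp (Or.inr ⟨hqV, rfl⟩)
    have hsFp : s ∈ Fp := hFlsub (Fl_mono e hb.le hs1)
    rcases hsFp with h | h
    · exact hs2 h
    · have h1 : cq e s ≤ b := cq_le e hs1
      have h2 : cq e q ≤ b := h.2 ▸ h1
      exact absurd (lt_of_le_of_lt h2 hb) (lt_irrefl _)


lemma atomisticF (hcpx : IsCpx V H) (hbr : BoolRep V H)
    (e : L ≃o {F : Set α // IsCFlat V H F}) : AtomisticLat L := by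
  classical
  intro x
  set s : Finset L := Finset.univ.filter (fun a => IsAtom a ∧ a ≤ x) with hs
  refine ⟨s, fun a ha => (Finset.mem_filter.mp ha).2.1, le_antisymm ?_ ?_⟩
  · apply le_of_Fl e
    intro v hv
    have hvV : v ∈ V := Fl_subset_V e x hv
    by_cases hvM : v ∈ Fl e ⊥
    · exact M_subset e (Fl_flat e _) hvM
    · have hatom := clp_atom hcpx hbr e hvV hvM
      have hle : cq e v ≤ x := cq_le e hv
      have hmem : cq e v ∈ s := Finset.mem_filter.mpr ⟨Finset.mem_univ _, hatom, hle⟩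
      have : cq e v ≤ s.sup id := Finset.le_sup (f := id) hmem
      exact Fl_mono e this (mem_Fl_cq e hvV)
  · exact Finset.sup_le fun a ha => (Finset.mem_filter.mp ha).2.2

lemma no_superclique_F (hh : hasHeight L 3) (hcpx : IsCpx V H) (hbr : BoolRep V H)
    (e : L ≃o {F : Set α // IsCFlat V H F}) : ¬ ∃ W : Set L, IsSuperclique L W := by
  rintro ⟨W, hWa, hW2, hWcl, hWsc⟩
  have hatom := atomisticF hcpx hbr e
  -- there is an atom outside W
  obtain ⟨t, htA, htW⟩ : ∃ t, IsAtom t ∧ t ∉ W := by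
    obtain ⟨c, hc⟩ := hh.1
    have h01 : c 0 < c 1 := hc (by decide)
    have h12 : c 1 < c 2 := hc (by decide)
    have h23 : c 2 < c 3 := hc (by decide)
    have hbc1 : (⊥ : L) < c 1 := lt_of_le_of_lt bot_le h01
    have hy2top : c 2 ≠ ⊤ := ne_top_of_lt (lt_of_lt_of_le h23 le_top)
    obtain ⟨s, hsA, hsy⟩ := hatom (c 2)
    have hsne : s.Nonempty := by
      rcases Finset.eq_empty_or_nonempty s with h | h
      · rw [h] at hsy
        simp at hsy
        exact absurd (hsy ▸ (hbc1.trans h12)) (by simp)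
      · exact h
    obtain ⟨a', ha'⟩ := hsne
    have : ∃ b' ∈ s, b' ≠ a' := by
      by_contra hall
      push_neg at hall
      have h1 : c 2 ≤ a' := hsy ▸ Finset.sup_le (fun b hb => (hall b hb) ▸ (le_refl (id b)))
      have h2 : a' ≤ c 2 := hsy ▸ Finset.le_sup (f := id) ha'
      have : IsAtom (c 2) := (le_antisymm h2 h1) ▸ hsA a' ha'
      exact hbc1.ne' (this.2 (c 1) h12)
    obtain ⟨b', hb', hba'⟩ := this
    have hjoin : a' ⊔ b' ≠ ⊤ := by
      intro h
      have : a' ⊔ b' ≤ c 2 :=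
        sup_le (hsy ▸ Finset.le_sup (f := id) ha') (hsy ▸ Finset.le_sup (f := id) hb')
      exact hy2top (top_le_iff.mp (h ▸ this))
    by_cases haW : a' ∈ W
    · refine ⟨b', hsA b' hb', fun hbW => ?_⟩
      exact hjoin (hWcl a' haW b' hbW (Ne.symm hba')).2.2.2
    · exact ⟨a', hsA a' ha', haW⟩
  -- two distinct elements of W
  obtain ⟨w1, hw1, w2, hw2, hw12⟩ := (Set.one_lt_ncard (Set.toFinite W)).mp (by omega)
  set Fhat : Set α := {v | ∃ w ∈ W, v ∈ Fl e w} with hFhatdef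
  have hFhatV : Fhat ⊆ V := by rintro v ⟨w, _, hv⟩; exact Fl_subset_V e w hv
  have hMsub : Fl e ⊥ ⊆ Fhat := fun v hv => ⟨w1, hw1, M_subset e (Fl_flat e w1) hv⟩
  have hclass : ∀ q ∈ Fhat, q ∉ Fl e ⊥ → cq e q ∈ W := by
    rintro q ⟨w, hwW, hqw⟩ hqM
    have h1 : cq e q ≤ w := cq_le e hqw
    have h2 : cq e q ≠ ⊥ := cq_ne_bot e (hFhatV ⟨w, hwW, hqw⟩) hqM
    rcases (hWa hwW).le_iff.mp h1 with h | h
    · exact absurd h h2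
    · exact h ▸ hwW
  have hnotflat : ¬ IsCFlat V H Fhat := by
    intro hflatF
    have h1 : ∀ w ∈ W, w ≤ e.symm ⟨Fhat, hflatF⟩ := by
      intro w hw
      apply le_of_Fl e
      rw [Fl_symm]
      exact fun v hv => ⟨w, hw, hv⟩
    have htople : (⊤ : L) ≤ e.symm ⟨Fhat, hflatF⟩ := by
      rw [← (hWcl w1 hw1 w2 hw2 hw12).2.2.2]
      exact sup_le (h1 w1 hw1) (h1 w2 hw2)
    have hFV : Fhat = V := by
      rw [← Fl_symm e hflatF, top_le_iff.mp htople, Fl_top]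
    have hbt : Fl e ⊥ ⊂ Fl e t := by
      have hblt : (⊥ : L) < t := bot_lt_iff_ne_bot.mpr htA.1
      exact Set.ssubset_def.mpr ⟨Fl_mono e hblt.le, fun h => hblt.ne (e.injective (Subtype.ext
        (Set.Subset.antisymm (Fl_mono e hblt.le) h)))⟩
    obtain ⟨st, hst1, hst2⟩ := Set.exists_of_ssubset hbt
    have hstV : st ∈ V := Fl_subset_V e t hst1
    have hstF : st ∈ Fhat := hFV ▸ hstV
    obtain ⟨w, hwW, hstw⟩ := hstF
    have h2 : cq e st ≠ ⊥ := cq_ne_bot e hstV hst2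
    have h3 : cq e st = w := by
      rcases (hWa hwW).le_iff.mp (cq_le e hstw) with h | h
      · exact absurd h h2
      · exact h
    have h4 : cq e st = t := by
      rcases htA.le_iff.mp (cq_le e hst1) with h | h
      · exact absurd h h2
      · exact h
    exact htW ((h4 ▸ h3.symm) ▸ hwW)
  rw [IsCFlat, not_and] at hnotflat
  have := hnotflat hFhatV
  push_neg at this
  obtain ⟨I, hI, hIs, r, hrVF, hbad⟩ := this
  obtain ⟨hrV, hrF⟩ := hrVF
  have hrM : r ∉ Fl e ⊥ := fun h => hrF (hMsub h)
  have crA : IsAtom (cq e r) := clp_atom hcpx hbr e hrV hrM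
  have crW : cq e r ∉ W := fun h => hrF ⟨_, h, mem_Fl_cq e hrV⟩
  have hIclass : ∀ q ∈ I, cq e q ∈ W := fun q hq =>
    hclass q (hIs hq) (mem_H_not_M hbr e hI hq)
  have hIV : ∀ q ∈ I, q ∈ V := fun q hq => hcpx.2.2.2.1 I hI hq
  -- r is not in the closure flat of any member of I
  have hrnotin : ∀ q ∈ I, r ∉ Fl e (cq e q) := by
    intro q hq hmem
    have h1 : cq e r ≤ cq e q := cq_le e hmem
    have h2 : cq e q ∈ W := hIclass q hq
    rcases (hWa h2).le_iff.mp h1 with h | h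
    · exact crA.1 h
    · exact crW (h ▸ h2)
  obtain ⟨k, Fc, x, hflat, hsm, hinj, hXr, hmem⟩ := hbr I hI
  match k, Fc, x, hflat, hsm, hinj, hXr, hmem with
  | 0, Fc, x, hflat, hsm, hinj, hXr, hmem =>
    apply hbad
    have hIe : I = ∅ := by rw [hXr, Set.range_eq_empty]
    rw [hIe]
    have := singleton_mem_H hcpx e hrV hrM
    simpa using this
  | 1, Fc, x, hflat, hsm, hinj, hXr, hmem =>
    apply hbad
    have hx0 : x 0 ∈ I := hXr ▸ ⟨0, rfl⟩
    refine (Fl_flat e (cq e (x 0))).2 I hI ?_ r ⟨hrV, hrnotin _ hx0⟩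
    intro q hq
    rw [hXr] at hq
    obtain ⟨i, rfl⟩ := hq
    have : i = 0 := Subsingleton.elim i 0
    rw [this]
    exact mem_Fl_cq e (hIV _ hx0)
  | 2, Fc, x, hflat, hsm, hinj, hXr, hmem =>
    apply hbad
    have hx0 : x 0 ∈ I := hXr ▸ ⟨0, rfl⟩
    have hx1 : x 1 ∈ I := hXr ▸ ⟨1, rfl⟩
    have hxne : x 0 ≠ x 1 := fun h => absurd (hinj h) (by decide)
    have hw0 : cq e (x 0) ∈ W := hIclass _ hx0
    have hw1 : cq e (x 1) ∈ W := hIclass _ hx1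
    have hcqne : cq e (x 0) ≠ cq e (x 1) := fun h =>
      mem_H_cq_ne hcpx hbr e hI hx0 hx1 hxne h
    have hI2 : I = {x 0, x 1} := by
      rw [hXr]
      ext v
      simp [Fin.exists_fin_two, eq_comm]
    have key : ∀ u v : α, u ∈ I → v ∈ I → cq e u ∈ W → cq e v ∈ W →
        cq e u ≠ cq e v → ¬ AdjL L (cq e r) (cq e u) → insert v (insert r {u}) ∈ H := by
      intro u v hu hv hcuW hcvW hcuv hnadj
      have hcru : cq e r ≠ cq e u := fun h => crW (h ▸ hcuW)
      have hjoin : cq e r ⊔ cq e u ≠ ⊤ := fun h => hnadj ⟨crA, hWa hcuW, hcru, h⟩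
      have huH : ({u} : Set α) ∈ H := hcpx.2.2.2.2 I hI {u} (Set.singleton_subset_iff.mpr hu)
      have hins1 : insert r {u} ∈ H :=
        (Fl_flat e (cq e u)).2 {u} huH (Set.singleton_subset_iff.mpr (mem_Fl_cq e (hIV u hu)))
          r ⟨hrV, hrnotin u hu⟩
      have hvnot : v ∉ Fl e (cq e r ⊔ cq e u) := by
        intro hvmem
        have h1 : cq e v ≤ cq e r ⊔ cq e u := cq_le e hvmem
        have h2 : cq e u ⊔ cq e v = ⊤ := (hWcl _ hcuW _ hcvW hcuv).2.2.2
        apply hjoin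
        apply top_le_iff.mp
        rw [← h2]
        exact sup_le (le_sup_right) (h1.trans (le_refl _))
      refine (Fl_flat e (cq e r ⊔ cq e u)).2 (insert r {u}) hins1 ?_ v ⟨hIV v hv, hvnot⟩
      intro p hp
      rcases hp with rfl | rfl
      · exact Fl_mono e le_sup_left (mem_Fl_cq e hrV)
      · exact Fl_mono e le_sup_right (mem_Fl_cq e (hIV _ hu))
    rcases hWsc _ hw0 _ hw1 hcqne (cq e r) ⟨crA, crW⟩ with hna | hna
    · have := key (x 0) (x 1) hx0 hx1 hw0 hw1 hcqne hna
      have heq : insert (x 1) (insert r {x 0}) = insert r I := by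
        rw [hI2]; ext p; simp; tauto
      rwa [heq] at this
    · have := key (x 1) (x 0) hx1 hx0 hw1 hw0 (Ne.symm hcqne) hna
      have heq : insert (x 0) (insert r {x 1}) = insert r I := by
        rw [hI2]; ext p; simp; tauto
      rwa [heq] at this
  | (k+3), Fc, x, hflat, hsm, hinj, hXr, hmem =>
    exfalso
    have i0 : Fin (k+3) := ⟨0, by omega⟩
    have hx : ∀ i : Fin (k+3), x i ∈ I := fun i => hXr ▸ ⟨i, rfl⟩
    set j0 : Fin (k+3) := ⟨0, by omega⟩ with hj0
    set j1 : Fin (k+3) := ⟨1, by omega⟩ with hj1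
    set j2 : Fin (k+3) := ⟨2, by omega⟩ with hj2
    have hne01 : x j0 ≠ x j1 := fun h => absurd (hinj h) (by simp [hj0, hj1, Fin.ext_iff])
    have hcqne : cq e (x j0) ≠ cq e (x j1) := fun h =>
      mem_H_cq_ne hcpx hbr e hI (hx j0) (hx j1) hne01 h
    have hw0 : cq e (x j0) ∈ W := hIclass _ (hx j0)
    have hw1 : cq e (x j1) ∈ W := hIclass _ (hx j1)
    have hsub0 : Fl e (cq e (x j0)) ⊆ Fc j2.castSucc := by
      have h1 : Fl e (cq e (x j0)) ⊆ Fc j0.succ := cq_le_flat e (hflat _) (hmem j0).1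
      refine h1.trans (hsm.monotone ?_)
      rw [Fin.le_def]
      simp [hj0, hj2]
    have hsub1 : Fl e (cq e (x j1)) ⊆ Fc j2.castSucc := by
      have h1 : Fl e (cq e (x j1)) ⊆ Fc j1.succ := cq_le_flat e (hflat _) (hmem j1).1
      refine h1.trans (hsm.monotone ?_)
      rw [Fin.le_def]
      simp [hj1, hj2]
      exact Nat.mod_le _ _
    set yc := e.symm ⟨Fc j2.castSucc, hflat _⟩ with hyc
    have hFlyc : Fl e yc = Fc j2.castSucc := Fl_symm e _
    have hle0 : cq e (x j0) ≤ yc := le_of_Fl e (by rw [hFlyc]; exact hsub0)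
    have hle1 : cq e (x j1) ≤ yc := le_of_Fl e (by rw [hFlyc]; exact hsub1)
    have htople : (⊤ : L) ≤ yc := by
      rw [← (hWcl _ hw0 _ hw1 hcqne).2.2.2]
      exact sup_le hle0 hle1
    have hVeq : Fc j2.castSucc = V := by
      rw [← hFlyc, top_le_iff.mp htople, Fl_top]
    exact (hmem j2).2 (hVeq ▸ hIV _ (hx j2))

end Forward

/-- A finite lattice `L` of height 3 is isomorphic to the lattice of flats of
some boolean representable finite simplicial complex if and only if `L` is
atomistic and the graph `Γ_L` has no supercliques. -/
theorem stmt18 (L : Type u) [Lattice L] [Fintype L] [BoundedOrder L]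
    (hh : hasHeight L 3) :
    (∃ (α : Type u) (V : Set α) (H : Set (Set α)), IsCpx V H ∧ BoolRep V H ∧
        Nonempty (L ≃o {F : Set α // IsCFlat V H F})) ↔
    (AtomisticLat L ∧ ¬ ∃ W : Set L, IsSuperclique L W) := by
  constructor
  · rintro ⟨α, V, H, hcpx, hbr, ⟨e⟩⟩
    exact ⟨atomisticF hcpx hbr e, no_superclique_F hh hcpx hbr e⟩
  · rintro ⟨hat, hsc⟩
    exact backward hh hat hsc
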